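/- The product formula for the polar sine: if X = (x_0,…,x_{d+1}) has distinct, affinely independent vertices in a real Hilbert space and 1 ≤ i ≤ d+1, then p_d sin_{x_0}(X) = sin(θ_i(X)) · p_{d−1} sin_{x_0}(X(i)), where θ_i(X) is the elevation angle of x_i with respect to the affine span of the remaining vertices X(i), i.e., sin(θ_i(X)) = dist(x_i, aff(X(i)))/‖x_i − x_0‖. -/

import Mathlib

/-- The `n`-content: square root of the Gram determinant of the vectors `v`. -/
noncomputable def gramContent {H : Type*} [NormedAddCommGroup H] [InnerProductSpace ℝ H]
    {n : ℕ} (v : Fin n → H) : ℝ :=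
  Real.sqrt (Matrix.det (Matrix.of fun i j => (inner ℝ (v i) (v j) : ℝ)))

namespace StmtAux

open Matrix Finset Metric

variable {H : Type*} [NormedAddCommGroup H] [InnerProductSpace ℝ H]

/-- The Gram matrix of a tuple of vectors. -/
noncomputable def gm {n : ℕ} (u : Fin n → H) : Matrix (Fin n) (Fin n) ℝ :=
  Matrix.of fun i j => (inner ℝ (u i) (u j) : ℝ)

lemma det_gm_update_add_smul {n : ℕ} (u : Fin n → H) {k m : Fin n} (h : m ≠ k) (t : ℝ) :
    (gm (Function.update u k (u k + t • u m))).det = (gm u).det := by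
  classical
  set C : Matrix (Fin n) (Fin n) ℝ :=
    Matrix.updateCol (gm u) k (fun i => gm u i k + t • gm u i m) with hCdef
  have hC : C.det = (gm u).det := Matrix.det_updateCol_add_smul_self _ (Ne.symm h) t
  have hR : (Matrix.updateRow C k (C k + t • C m)).det = C.det :=
    Matrix.det_updateRow_add_smul_self _ (Ne.symm h) t
  have hEq : gm (Function.update u k (u k + t • u m)) = Matrix.updateRow C k (C k + t • C m) := by
    ext i j
    by_cases hik : i = k <;> by_cases hjk : j = k <;>
      simp [gm, hCdef, Matrix.updateRow_apply, Matrix.updateCol_apply, hik, hjk,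
        Function.update_apply, h, inner_add_left, inner_add_right, real_inner_smul_left,
        real_inner_smul_right, smul_eq_mul, -inner_self_eq_norm_sq_to_K] <;>
      ring
  rw [hEq, hR, hC]

lemma det_gm_update_add_sum {n : ℕ} (k : Fin (n + 1)) (a : Fin n → ℝ) (s : Finset (Fin n)) :
    ∀ u : Fin (n + 1) → H,
      (gm (Function.update u k (u k + ∑ j ∈ s, a j • u (k.succAbove j)))).det = (gm u).det := by
  classical
  induction s using Finset.induction_on with
  | empty => intro u; simp
  | @insert m s hms ih =>
    intro u
    set u' : Fin (n + 1) → H := Function.update u k (u k + a m • u (k.succAbove m)) with hu'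
    have h1 : ∀ j : Fin n, u' (k.succAbove j) = u (k.succAbove j) := by
      intro j; simp [hu', Function.update_of_ne (Fin.succAbove_ne k j)]
    have hs : ∑ j ∈ s, a j • u' (k.succAbove j) = ∑ j ∈ s, a j • u (k.succAbove j) :=
      Finset.sum_congr rfl fun j _ => by rw [h1]
    have h2 : Function.update u' k (u' k + ∑ j ∈ s, a j • u' (k.succAbove j)) =
        Function.update u k (u k + (a m • u (k.succAbove m) +
          ∑ j ∈ s, a j • u (k.succAbove j))) := by
      rw [hs, hu', Function.update_idem, Function.update_self, add_assoc]
    rw [Finset.sum_insert hms, ← h2, ih u', hu',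
      det_gm_update_add_smul u (Fin.succAbove_ne k m) (a m)]

lemma det_gm_succAbove {n : ℕ} (u : Fin (n + 1) → H) (k : Fin (n + 1)) :
    (gm u).det =
      (Metric.infDist (u k) ((Submodule.span ℝ (Set.range (u ∘ k.succAbove)) : Submodule ℝ H) :
          Set H)) ^ 2 * (gm (u ∘ k.succAbove)).det := by
  classical
  set W : Submodule ℝ H := Submodule.span ℝ (Set.range (u ∘ k.succAbove)) with hW
  haveI : FiniteDimensional ℝ W :=
    FiniteDimensional.span_of_finite ℝ (Set.finite_range (u ∘ k.succAbove))
  set c : H := (W.orthogonalProjectionOnto (u k) : H) with hc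
  set q : H := u k - c with hq
  have hcW : c ∈ W := (W.orthogonalProjectionOnto (u k)).2
  have hq_orth : ∀ w ∈ W, (inner ℝ q w : ℝ) = 0 := fun w hw =>
    W.starProjection_inner_eq_zero (u k) w hw
  -- step 1: replace u k by q without changing the Gram determinant
  obtain ⟨a, ha⟩ := (Submodule.mem_span_range_iff_exists_fun ℝ).1 hcW
  have hstep1 : (gm (Function.update u k q)).det = (gm u).det := by
    have := det_gm_update_add_sum k (fun j => -a j) Finset.univ u
    have hsum : u k + ∑ j : Fin n, (fun j => -a j) j • u (k.succAbove j) = q := by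
      have hneg : ∑ j : Fin n, (fun j => -a j) j • u (k.succAbove j) =
          -∑ j : Fin n, a j • (u ∘ k.succAbove) j := by
        rw [← Finset.sum_neg_distrib]
        exact Finset.sum_congr rfl fun j _ => by rw [neg_smul]; rfl
      rw [hneg, ha, hq, sub_eq_add_neg]
    rwa [hsum] at this
  set v : Fin (n + 1) → H := Function.update u k q with hv
  -- properties of the Gram matrix of v
  have hmemW : ∀ j : Fin (n + 1), j ≠ k → v j ∈ W := by
    intro j hj
    obtain ⟨j', rfl⟩ := Fin.exists_succAbove_eq hj
    rw [hv, Function.update_of_ne (Fin.succAbove_ne k j')]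
    exact Submodule.subset_span ⟨j', rfl⟩
  have hrow : ∀ j : Fin (n + 1), j ≠ k → gm v k j = 0 := by
    intro j hj
    simp only [gm, Matrix.of_apply]
    rw [hv, Function.update_self]
    exact hq_orth _ (hmemW j hj)
  have hdiag : gm v k k = ‖q‖ ^ 2 := by
    simp only [gm, Matrix.of_apply]
    rw [hv, Function.update_self, real_inner_self_eq_norm_sq]
  have hsub : (gm v).submatrix k.succAbove k.succAbove = gm (u ∘ k.succAbove) := by
    ext i j
    simp [gm, Matrix.submatrix_apply, hv,
      Function.update_of_ne (Fin.succAbove_ne k i), Function.update_of_ne (Fin.succAbove_ne k j)]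
  -- step 2: expand the determinant along row k
  have hdet_v : (gm v).det = ‖q‖ ^ 2 * (gm (u ∘ k.succAbove)).det := by
    rw [Matrix.det_succ_row (gm v) k]
    rw [Finset.sum_eq_single_of_mem k (Finset.mem_univ k)
      (fun b _ hb => by rw [hrow b hb]; ring)]
    rw [hdiag, hsub]
    have : (-1 : ℝ) ^ ((k : ℕ) + (k : ℕ)) = 1 := Even.neg_one_pow ⟨k, rfl⟩
    rw [this]; ring
  -- step 3: identify ‖q‖ with the infimum distance
  have hdist : Metric.infDist (u k) (W : Set H) = ‖q‖ := by
    apply le_antisymm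
    · have := Metric.infDist_le_dist_of_mem (x := u k) (show c ∈ (W : Set H) from hcW)
      rwa [dist_eq_norm] at this
    · haveI : Nonempty (W : Set H) := ⟨⟨0, W.zero_mem⟩⟩
      rw [Metric.infDist_eq_iInf]
      apply le_ciInf
      rintro ⟨y, hy⟩
      simp only
      rw [dist_eq_norm]
      have hdecomp : u k - y = q + (c - y) := by rw [hq]; abel
      have horth : (inner ℝ q (c - y) : ℝ) = 0 := hq_orth _ (W.sub_mem hcW hy)
      have hsq : ‖u k - y‖ ^ 2 = ‖q‖ ^ 2 + ‖c - y‖ ^ 2 := by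
        rw [hdecomp, @norm_add_sq_real, horth]; ring
      nlinarith [norm_nonneg (u k - y), norm_nonneg q, sq_nonneg ‖c - y‖]
  rw [hdist, ← hdet_v, ← hstep1, hv]

lemma gramContent_succAbove {n : ℕ} (u : Fin (n + 1) → H) (k : Fin (n + 1)) :
    gramContent u =
      Metric.infDist (u k) ((Submodule.span ℝ (Set.range (u ∘ k.succAbove)) : Submodule ℝ H) :
          Set H) * gramContent (u ∘ k.succAbove) := by
  have h1 : gramContent u = Real.sqrt (gm u).det := rfl
  have h2 : gramContent (u ∘ k.succAbove) = Real.sqrt (gm (u ∘ k.succAbove)).det := rfl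
  rw [h1, h2, det_gm_succAbove u k, Real.sqrt_mul (sq_nonneg _), Real.sqrt_sq
    Metric.infDist_nonneg]

end StmtAux

/-- The product formula for the polar sine: for `1 ≤ i ≤ d+1`,
`p_d sin_{x_0}(X) = sin(θ_i(X)) · p_{d-1} sin_{x_0}(X(i))`, where
`sin(θ_i(X)) = dist(x_i, aff(X(i)))/‖x_i − x_0‖` is the elevation sine. -/
theorem stmt_7 {H : Type*} [NormedAddCommGroup H] [InnerProductSpace ℝ H] [CompleteSpace H]
    (d : ℕ) (X : Fin (d + 2) → H) (hX : Function.Injective X)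
    (hXa : AffineIndependent ℝ X) (i : Fin (d + 2)) (hi : i ≠ 0) :
    gramContent (fun j : Fin (d + 1) => X j.succ - X 0) /
        ∏ j : Fin (d + 1), ‖X j.succ - X 0‖ =
      (Metric.infDist (X i) (affineSpan ℝ (Set.range (X ∘ i.succAbove)) : Set H) /
          ‖X i - X 0‖) *
        (gramContent (fun j : Fin d => X (i.succAbove j.succ) - X 0) /
          ∏ j : Fin d, ‖X (i.succAbove j.succ) - X 0‖) := by
  classical
  set v : Fin (d + 1) → H := fun j => X j.succ - X 0 with hv
  set k : Fin (d + 1) := i.pred hi with hk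
  have hks : k.succ = i := Fin.succ_pred i hi
  have hvk : v k = X i - X 0 := by rw [hv]; simp [hks]
  have hcomp : (v ∘ k.succAbove) = fun j : Fin d => X (i.succAbove j.succ) - X 0 := by
    funext j
    simp only [Function.comp_apply, hv]
    rw [← hks, Fin.succ_succAbove_succ]
  have h0 : i.succAbove 0 = 0 := by
    rw [Fin.succAbove_of_castSucc_lt]
    · rfl
    · simpa using Fin.pos_of_ne_zero hi
  -- span equality
  set W : Submodule ℝ H := Submodule.span ℝ (Set.range (v ∘ k.succAbove)) with hW
  have hspan : Submodule.span ℝ (Set.range fun j : Fin (d + 1) => X (i.succAbove j) - X 0) = W := by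
    apply le_antisymm
    · rw [Submodule.span_le]
      rintro _ ⟨j, rfl⟩
      induction j using Fin.cases with
      | zero => simp only [h0, sub_self]; exact W.zero_mem
      | succ m =>
        apply Submodule.subset_span
        exact ⟨m, by rw [hcomp]⟩
    · rw [Submodule.span_le]
      rintro _ ⟨j, rfl⟩
      apply Submodule.subset_span
      exact ⟨j.succ, by rw [hcomp]⟩
  -- the affine span as a translate of W
  have hX0mem : (X 0) ∈ affineSpan ℝ (Set.range (X ∘ i.succAbove)) :=
    mem_affineSpan ℝ ⟨0, by simp [h0]⟩
  have hdir : (affineSpan ℝ (Set.range (X ∘ i.succAbove))).direction = W := by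
    rw [direction_affineSpan, vectorSpan_range_eq_span_range_vsub_right ℝ (X ∘ i.succAbove) 0,
      ← hspan]
    congr 1
    ext w
    constructor <;> rintro ⟨j, rfl⟩ <;> exact ⟨j, by simp [h0, vsub_eq_sub]⟩
  have hset : (affineSpan ℝ (Set.range (X ∘ i.succAbove)) : Set H) =
      (fun w => X 0 + w) '' (W : Set H) := by
    ext x
    constructor
    · intro hx
      refine ⟨x - X 0, ?_, by show X 0 + (x - X 0) = x; abel⟩
      have := (AffineSubspace.vsub_right_mem_direction_iff_mem hX0mem x).2 hx
      rwa [hdir, vsub_eq_sub] at this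
    · rintro ⟨w, hw, rfl⟩
      have : (X 0 + w) -ᵥ X 0 ∈ (affineSpan ℝ (Set.range (X ∘ i.succAbove))).direction := by
        rw [hdir]; simpa [vsub_eq_sub] using hw
      exact (AffineSubspace.vsub_right_mem_direction_iff_mem hX0mem _).1 this
  have hisom : Isometry (fun w : H => X 0 + w) :=
    Isometry.of_dist_eq fun a b => dist_add_left (X 0) a b
  have hdist : Metric.infDist (X i) (affineSpan ℝ (Set.range (X ∘ i.succAbove)) : Set H) =
      Metric.infDist (v k) (W : Set H) := by
    have hXi : X i = (fun w : H => X 0 + w) (X i - X 0) := by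
      show X i = X 0 + (X i - X 0); abel
    rw [hset, hvk]
    conv_lhs => rw [hXi]
    exact Metric.infDist_image (x := X i - X 0) (t := (W : Set H)) hisom
  -- assemble
  have key := StmtAux.gramContent_succAbove v k
  have hprod : ∏ j : Fin (d + 1), ‖v j‖ = ‖v k‖ * ∏ j : Fin d, ‖v (k.succAbove j)‖ :=
    Fin.prod_univ_succAbove (fun j => ‖v j‖) k
  have hprod2 : ∏ j : Fin d, ‖X (i.succAbove j.succ) - X 0‖ =
      ∏ j : Fin d, ‖v (k.succAbove j)‖ := by
    apply Finset.prod_congr rfl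
    intro j _
    rw [show v (k.succAbove j) = (v ∘ k.succAbove) j from rfl, hcomp]
  have hgc2 : gramContent (fun j : Fin d => X (i.succAbove j.succ) - X 0) =
      gramContent (v ∘ k.succAbove) := by rw [hcomp]
  calc gramContent v / ∏ j : Fin (d + 1), ‖v j‖
      = (Metric.infDist (v k) (W : Set H) * gramContent (v ∘ k.succAbove)) /
        (‖v k‖ * ∏ j : Fin d, ‖v (k.succAbove j)‖) := by rw [key, hprod]
    _ = (Metric.infDist (v k) (W : Set H) / ‖v k‖) *
        (gramContent (v ∘ k.succAbove) / ∏ j : Fin d, ‖v (k.succAbove j)‖) := by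
        rw [div_mul_div_comm]
    _ = _ := by rw [hdist, hvk, hgc2, hprod2]
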